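/- arXiv:2301.02036 — 5 statements merged into one kernel-verified Lean document; each statement's English description precedes it below -/
import Mathlib

section
/- Let α and β be commuting symmetric real n×n matrices. Then there exists δ > 0 such that for all ε with 0 < ε < δ, ker(α + ε·β) = ker α ∩ ker β. -/
open Matrix

private lemma exists_ne_zero_eigenvalue {F : Type*} [NormedAddCommGroup F]
    [InnerProductSpace ℝ F] [FiniteDimensional ℝ F] {T : F →ₗ[ℝ] F}
    (hT : T.IsSymmetric) (hT0 : T ≠ 0) :
    ∃ c : ℝ, c ≠ 0 ∧ Module.End.HasEigenvalue T c := by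
  by_contra h
  push_neg at h
  have htop : (⨆ μ : ℝ, Module.End.eigenspace T μ) = ⊤ := by
    have := hT.orthogonalComplement_iSup_eigenspaces_eq_bot
    rwa [Submodule.orthogonal_eq_bot_iff] at this
  have hle : (⨆ μ : ℝ, Module.End.eigenspace T μ) ≤ LinearMap.ker T := by
    refine iSup_le fun μ => ?_
    by_cases hμ : μ = 0
    · subst hμ; rw [Module.End.eigenspace_zero]
    · have h2 := h μ hμ
      rw [Module.End.HasEigenvalue] at h2
      have h3 : Module.End.eigenspace T μ = ⊥ := not_not.1 h2
      rw [h3]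
      exact bot_le
  apply hT0
  ext x
  have hx : x ∈ LinearMap.ker T := hle (htop ▸ Submodule.mem_top)
  simpa using hx

private lemma key_step {n : ℕ}
    (A B : EuclideanSpace ℝ (Fin n) →ₗ[ℝ] EuclideanSpace ℝ (Fin n))
    (hB : B.IsSymmetric) (hc : ∀ v, A (B v) = B (A v)) (ε : ℝ)
    (hε : ∀ lam mu : ℝ, lam ≠ 0 → Module.End.HasEigenvalue B lam →
      Module.End.HasEigenvalue A mu → mu + ε * lam ≠ 0)
    (x : EuclideanSpace ℝ (Fin n)) (hx : (A + ε • B) x = 0) :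
    A x = 0 ∧ B x = 0 := by
  set V : Submodule ℝ (EuclideanSpace ℝ (Fin n)) := LinearMap.ker (A + ε • B) with hV
  have hinv : ∀ v ∈ V, B v ∈ V := by
    intro v hv
    have hv0 : A v + ε • B v = 0 := hv
    show A (B v) + ε • B (B v) = 0
    rw [hc v, ← _root_.map_smul, ← map_add, hv0, map_zero]
  have hBr : (B.restrict hinv) = 0 := by
    by_contra hne
    obtain ⟨lam, hlam0, hlam⟩ :=
      exists_ne_zero_eigenvalue ((hB.restrict_invariant hinv)) hne
    obtain ⟨v, hvmem, hvne⟩ := hlam.exists_hasEigenvector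
    rw [Module.End.mem_eigenspace_iff] at hvmem
    have hBv : B (v : EuclideanSpace ℝ (Fin n)) = lam • (v : EuclideanSpace ℝ (Fin n)) :=
      congrArg Subtype.val hvmem
    have hv0 : A (v : EuclideanSpace ℝ (Fin n)) + ε • B (v : EuclideanSpace ℝ (Fin n)) = 0 := v.2
    have hAv : A (v : EuclideanSpace ℝ (Fin n)) = (-(ε * lam)) • (v : EuclideanSpace ℝ (Fin n)) := by
      rw [hBv, smul_smul] at hv0
      have := eq_neg_of_add_eq_zero_left hv0
      rw [this, neg_smul]
    have hvne' : (v : EuclideanSpace ℝ (Fin n)) ≠ 0 := fun h =>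
      hvne (Subtype.coe_injective h)
    have hBeig : Module.End.HasEigenvalue B lam :=
      Module.End.hasEigenvalue_of_hasEigenvector ⟨Module.End.mem_eigenspace_iff.2 hBv, hvne'⟩
    have hAeig : Module.End.HasEigenvalue A (-(ε * lam)) :=
      Module.End.hasEigenvalue_of_hasEigenvector ⟨Module.End.mem_eigenspace_iff.2 hAv, hvne'⟩
    exact hε lam (-(ε * lam)) hlam0 hBeig hAeig (by ring)
  have hxV : x ∈ V := hx
  have hBx : B x = 0 := by
    have h0 : (B.restrict hinv) ⟨x, hxV⟩ = 0 := by rw [hBr]; rfl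
    exact congrArg Subtype.val h0
  have hAx : A x = 0 := by
    have h0 : A x + ε • B x = 0 := hx
    rwa [hBx, smul_zero, add_zero] at h0
  exact ⟨hAx, hBx⟩

theorem stmt_0 (n : ℕ) (α β : Matrix (Fin n) (Fin n) ℝ)
    (hα : αᵀ = α) (hβ : βᵀ = β) (hcomm : α * β = β * α) :
    ∃ δ > (0 : ℝ), ∀ ε : ℝ, 0 < ε → ε < δ →
      LinearMap.ker (α + ε • β).mulVecLin =
        LinearMap.ker α.mulVecLin ⊓ LinearMap.ker β.mulVecLin := by
  set A := Matrix.toEuclideanLin α with hAdef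
  set B := Matrix.toEuclideanLin β with hBdef
  have hBsym : B.IsSymmetric := by
    rw [hBdef, ← Matrix.isHermitian_iff_isSymmetric, Matrix.IsHermitian,
      Matrix.conjTranspose_eq_transpose_of_trivial]
    exact hβ
  have hc : ∀ v, A (B v) = B (A v) := by
    intro v
    have h1 : A ∘ₗ B = B ∘ₗ A := by
      rw [hAdef, hBdef, Matrix.toEuclideanLin_eq_toLin, ← Matrix.toLin_mul, ← Matrix.toLin_mul,
        hcomm]
    exact LinearMap.ext_iff.1 h1 v
  set pA := minpoly ℝ A with hpA
  set pB := minpoly ℝ B with hpB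
  have hpA0 : pA ≠ 0 := minpoly.ne_zero A.isIntegral
  have hpB0 : pB ≠ 0 := minpoly.ne_zero B.isIntegral
  set S : Finset ℝ := (pA.roots.toFinset ×ˢ pB.roots.toFinset).image
    (fun p => -p.1 / p.2) with hS
  set P : Finset ℝ := S.filter (fun x => 0 < x) with hP
  obtain ⟨δ, hδpos, hδle⟩ : ∃ δ : ℝ, 0 < δ ∧ ∀ y ∈ P, δ ≤ y := by
    by_cases h : P.Nonempty
    · exact ⟨P.min' h, (Finset.mem_filter.1 (P.min'_mem h)).2, fun y hy => P.min'_le y hy⟩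
    · exact ⟨1, one_pos, fun y hy => absurd ⟨y, hy⟩ h⟩
  refine ⟨δ, hδpos, ?_⟩
  intro ε hε0 hεδ
  have hεnotP : ε ∉ P := fun hmem => absurd (hδle ε hmem) (not_le.2 hεδ)
  have hεgood : ∀ lam mu : ℝ, lam ≠ 0 → Module.End.HasEigenvalue B lam →
      Module.End.HasEigenvalue A mu → mu + ε * lam ≠ 0 := by
    intro lam mu hlam0 hBeig hAeig habs
    have hmuroot : mu ∈ pA.roots := by
      rw [hpA, Polynomial.mem_roots hpA0]
      exact (Module.End.hasEigenvalue_iff_isRoot).1 hAeig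
    have hlamroot : lam ∈ pB.roots := by
      rw [hpB, Polynomial.mem_roots hpB0]
      exact (Module.End.hasEigenvalue_iff_isRoot).1 hBeig
    have hεS : ε ∈ S := by
      rw [hS, Finset.mem_image]
      refine ⟨(mu, lam), ?_, ?_⟩
      · rw [Finset.mem_product]
        exact ⟨Multiset.mem_toFinset.2 hmuroot, Multiset.mem_toFinset.2 hlamroot⟩
      · show -mu / lam = ε
        have hmu : mu = -(ε * lam) := by linarith
        rw [hmu, neg_neg]
        exact mul_div_cancel_right₀ ε hlam0
    exact hεnotP (by rw [hP, Finset.mem_filter]; exact ⟨hεS, hε0⟩)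
  ext x
  rw [Submodule.mem_inf]
  constructor
  · intro hx
    have hx0 : (α + ε • β) *ᵥ x = 0 := hx
    have hx1 : Matrix.toEuclideanLin (α + ε • β) ((WithLp.equiv 2 (Fin n → ℝ)).symm x) = 0 := by
      rw [Matrix.toEuclideanLin_apply]; simp only [WithLp.equiv_symm_apply, hx0]; rfl
    have hEq : Matrix.toEuclideanLin (α + ε • β) = A + ε • B := by
      rw [map_add, hAdef, hBdef]
      congr 1
      exact LinearEquiv.map_smul _ ε β
    rw [hEq] at hx1
    obtain ⟨hAx, hBx⟩ := key_step A B hBsym hc ε hεgood _ hx1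
    have hA' := congrArg WithLp.ofLp hAx
    have hB' := congrArg WithLp.ofLp hBx
    rw [hAdef, Matrix.toEuclideanLin_apply] at hA'
    rw [hBdef, Matrix.toEuclideanLin_apply] at hB'
    exact ⟨by simpa using hA', by simpa using hB'⟩
  · rintro ⟨hx1, hx2⟩
    have h1 : α *ᵥ x = 0 := hx1
    have h2 : β *ᵥ x = 0 := hx2
    show (α + ε • β) *ᵥ x = 0
    rw [Matrix.add_mulVec, Matrix.smul_mulVec, h1, h2, smul_zero, add_zero]
end

section
/- Let α, β be commuting symmetric negative semidefinite real n×n matrices. For x ∈ ℝⁿ set y = lim_{t→∞} exp(tα)x and z = lim_{t→∞} exp(tβ)y. Then z equals the orthogonal projection of x onto ker α ∩ ker β, and moreover lim_{t→∞} exp(t(α+β))x = z. -/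
open Matrix Filter

namespace Stmt7Aux

variable {n : ℕ}

attribute [local instance] Matrix.frobeniusNormedAddCommGroup Matrix.frobeniusNormedRing
  Matrix.frobeniusNormedSpace Matrix.frobeniusNormedAlgebra

/-- `M ↦ M *ᵥ w` as a continuous linear map. -/
noncomputable def mvCLM (n : ℕ) (w : Fin n → ℝ) :
    Matrix (Fin n) (Fin n) ℝ →L[ℝ] (Fin n → ℝ) :=
  LinearMap.toContinuousLinearMap
    { toFun := fun M => M.mulVec w
      map_add' := fun M N => Matrix.add_mulVec M N w
      map_smul' := fun c M => Matrix.smul_mulVec c M w }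

lemma mvCLM_apply (w : Fin n → ℝ) (M : Matrix (Fin n) (Fin n) ℝ) :
    mvCLM n w M = M.mulVec w := rfl

lemma cont_mulVec (M : Matrix (Fin n) (Fin n) ℝ) :
    Continuous fun v : Fin n → ℝ => M.mulVec v :=
  (LinearMap.toContinuousLinearMap M.mulVecLin).continuous

lemma cont_dot (w : Fin n → ℝ) : Continuous fun v : Fin n → ℝ => v ⬝ᵥ w := by
  show Continuous fun v : Fin n → ℝ => ∑ i, v i * w i
  exact continuous_finset_sum _ fun i _ => (continuous_apply i).mul continuous_const

lemma hasDerivAt_exp_mulVec (A : Matrix (Fin n) (Fin n) ℝ) (w : Fin n → ℝ) (t : ℝ) :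
    HasDerivAt (fun u : ℝ => (NormedSpace.exp (u • A)).mulVec w)
      ((NormedSpace.exp (t • A) * A).mulVec w) t := by
  have h1 := hasDerivAt_exp_smul_const (𝕂 := ℝ) A t
  have h2 := ((mvCLM n w).hasFDerivAt
    (x := NormedSpace.exp (t • A))).comp_hasDerivAt t h1
  exact h2

lemma exp_fix {A : Matrix (Fin n) (Fin n) ℝ} {w : Fin n → ℝ}
    (hw : A.mulVec w = 0) (t : ℝ) : (NormedSpace.exp (t • A)).mulVec w = w := by
  have hder : ∀ s : ℝ,
      HasDerivAt (fun u : ℝ => (NormedSpace.exp (u • A)).mulVec w) 0 s := by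
    intro s
    have := hasDerivAt_exp_mulVec A w s
    simpa [← Matrix.mulVec_mulVec, hw] using this
  have hconst := is_const_of_deriv_eq_zero (𝕜 := ℝ)
    (fun s => (hder s).differentiableAt) (fun s => (hder s).deriv) t 0
  simpa [NormedSpace.exp_zero] using hconst

/-- Properties of the limit of `exp(tA)x` as `t → ∞`, for symmetric `A`. -/
lemma lim_props {A : Matrix (Fin n) (Fin n) ℝ} (hAt : Aᵀ = A) {x y : Fin n → ℝ}
    (hy : Tendsto (fun t : ℝ => (NormedSpace.exp (t • A)).mulVec x) atTop (nhds y)) :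
    A.mulVec y = 0 ∧ ∀ w : Fin n → ℝ, A.mulVec w = 0 → (x - y) ⬝ᵥ w = 0 := by
  have key : ∀ s : ℝ, (NormedSpace.exp (s • A)).mulVec y = y := by
    intro s
    have hshift : Tendsto (fun t : ℝ => (NormedSpace.exp ((t + s) • A)).mulVec x)
        atTop (nhds y) := by
      have := hy.comp (tendsto_atTop_add_const_right atTop s tendsto_id)
      simpa [Function.comp_def] using this
    have heq : ∀ t : ℝ, (NormedSpace.exp ((t + s) • A)).mulVec x
        = (NormedSpace.exp (s • A)).mulVec ((NormedSpace.exp (t • A)).mulVec x) := by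
      intro t
      rw [Matrix.mulVec_mulVec, ← Matrix.exp_add_of_commute _ _
        (((Commute.refl A).smul_left s).smul_right t)]
      rw [add_smul, add_comm]
    simp only [heq] at hshift
    have h2 : Tendsto
        (fun t : ℝ => (NormedSpace.exp (s • A)).mulVec ((NormedSpace.exp (t • A)).mulVec x))
        atTop (nhds ((NormedSpace.exp (s • A)).mulVec y)) :=
      ((cont_mulVec _).tendsto y).comp hy
    exact tendsto_nhds_unique h2 hshift
  constructor
  · have hc : (fun s : ℝ => (NormedSpace.exp (s • A)).mulVec y) = fun _ => y := funext key
    have hd := hasDerivAt_exp_mulVec A y 0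
    rw [hc] at hd
    have := hd.unique (hasDerivAt_const 0 y)
    simpa [NormedSpace.exp_zero] using this
  · intro w hw
    have hdot : ∀ t : ℝ, ((NormedSpace.exp (t • A)).mulVec x) ⬝ᵥ w = x ⬝ᵥ w := by
      intro t
      have hsym : (NormedSpace.exp (t • A))ᵀ = NormedSpace.exp (t • A) := by
        rw [← Matrix.exp_transpose, Matrix.transpose_smul, hAt]
      rw [dotProduct_comm, Matrix.dotProduct_mulVec, ← Matrix.mulVec_transpose, hsym,
        exp_fix hw, dotProduct_comm]
    have h1 : Tendsto (fun t : ℝ => ((NormedSpace.exp (t • A)).mulVec x) ⬝ᵥ w)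
        atTop (nhds (y ⬝ᵥ w)) := ((cont_dot w).tendsto y).comp hy
    simp only [hdot] at h1
    have h2 : y ⬝ᵥ w = x ⬝ᵥ w := tendsto_nhds_unique h1 tendsto_const_nhds
    rw [sub_dotProduct, h2, sub_self]

/-- Existence of the limit of `exp(tA)x` for symmetric negative semidefinite `A`. -/
lemma exp_limit_exists {A : Matrix (Fin n) (Fin n) ℝ} (hAt : Aᵀ = A)
    (hneg : (-A).PosSemidef) (x : Fin n → ℝ) :
    ∃ L, Tendsto (fun t : ℝ => (NormedSpace.exp (t • A)).mulVec x) atTop (nhds L) := by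
  have hherm : A.IsHermitian := by
    show Aᴴ = A
    ext i j
    simpa [Matrix.conjTranspose_apply] using congrFun (congrFun hAt i) j
  set lam := hherm.eigenvalues with hlam
  have hev : ∀ i, lam i ≤ 0 := by
    intro i
    have h0 := hneg.dotProduct_mulVec_nonneg ⇑(hherm.eigenvectorBasis i)
    have h1 := hherm.eigenvalues_eq i
    simp only [Matrix.neg_mulVec, dotProduct_neg, star_trivial] at h0 h1
    have : (0:ℝ) ≤ -(lam i) := by rw [hlam, h1]; simpa using h0
    linarith
  set U : Matrix (Fin n) (Fin n) ℝ := ↑(hherm.eigenvectorUnitary) with hU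
  have hrep : ∀ t : ℝ, NormedSpace.exp (t • A)
      = U * Matrix.diagonal (fun i => Real.exp (t * lam i)) * star U := by
    intro t
    have hD : Matrix.diagonal (fun i => t * lam i)
        = t • Matrix.diagonal (RCLike.ofReal ∘ hherm.eigenvalues) := by
      have he : (fun i => t * lam i) = t • (RCLike.ofReal ∘ hherm.eigenvalues) := by
        funext i
        simp [hlam, Function.comp, smul_eq_mul]
      rw [he, Matrix.diagonal_smul]
    have h1 : t • A = U * Matrix.diagonal (fun i => t * lam i) * star U := by
      rw [hD, mul_smul_comm, smul_mul_assoc]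
      conv_lhs => rw [hherm.spectral_theorem]
      rfl
    rw [h1]
    have hu : IsUnit U := ⟨Unitary.toUnits hherm.eigenvectorUnitary, rfl⟩
    have hinv : U⁻¹ = star U := by
      rw [Matrix.inv_eq_left_inv]
      exact Unitary.coe_star_mul_self hherm.eigenvectorUnitary
    rw [← hinv, Matrix.exp_conj _ _ hu, Matrix.exp_diagonal, hinv,
      Pi.exp_def]
    congr 2
    funext i
    rw [Real.exp_eq_exp_ℝ]
  set c : Fin n → ℝ := (star U).mulVec x with hc
  set dinf : Fin n → ℝ := fun i => if lam i = 0 then 1 else 0 with hdinf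
  refine ⟨U.mulVec ((Matrix.diagonal dinf).mulVec c), ?_⟩
  have hfun : ∀ t : ℝ, (NormedSpace.exp (t • A)).mulVec x
      = U.mulVec ((Matrix.diagonal (fun i => Real.exp (t * lam i))).mulVec c) := by
    intro t
    rw [hrep t, hc, Matrix.mulVec_mulVec, Matrix.mulVec_mulVec]
  simp only [hfun]
  have hdiag : Tendsto (fun t : ℝ => (fun i => Real.exp (t * lam i))) atTop (nhds dinf) := by
    rw [tendsto_pi_nhds]
    intro i
    rcases lt_or_eq_of_le (hev i) with h | h
    · have h1 : Tendsto (fun t : ℝ => t * lam i) atTop atBot :=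
        Tendsto.atTop_mul_const_of_neg h tendsto_id
      have h2 := Real.tendsto_exp_atBot.comp h1
      have h3 : dinf i = 0 := by simp [hdinf, ne_of_lt h]
      rw [h3]
      exact h2
    · have he : (fun t : ℝ => Real.exp (t * lam i)) = fun _ => 1 := by
        funext t; rw [h, mul_zero, Real.exp_zero]
      have h2 : dinf i = 1 := by simp [hdinf, h]
      rw [he, h2]
      exact tendsto_const_nhds
  have hcont : Continuous fun d : Fin n → ℝ => U.mulVec ((Matrix.diagonal d).mulVec c) :=
    (cont_mulVec U).comp <| by
      have : (fun d : Fin n → ℝ => (Matrix.diagonal d).mulVec c)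
          = fun d => (fun i => d i * c i) := by
        funext d; ext i; rw [Matrix.mulVec_diagonal]
      rw [this]
      exact continuous_pi fun i => (continuous_apply i).mul continuous_const
  exact (hcont.tendsto dinf).comp hdiag

end Stmt7Aux

open Stmt7Aux in
theorem stmt_7 (n : ℕ) (α β : Matrix (Fin n) (Fin n) ℝ)
    (hα : αᵀ = α) (hβ : βᵀ = β) (hcomm : α * β = β * α)
    (hαneg : (-α).PosSemidef) (hβneg : (-β).PosSemidef)
    (x y z : Fin n → ℝ)
    (hy : Tendsto (fun t : ℝ => (NormedSpace.exp (t • α)).mulVec x) atTop (nhds y))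
    (hz : Tendsto (fun t : ℝ => (NormedSpace.exp (t • β)).mulVec y) atTop (nhds z)) :
    (α.mulVec z = 0 ∧ β.mulVec z = 0 ∧
      ∀ w : Fin n → ℝ, α.mulVec w = 0 → β.mulVec w = 0 → (x - z) ⬝ᵥ w = 0) ∧
    Tendsto (fun t : ℝ => (NormedSpace.exp (t • (α + β))).mulVec x) atTop (nhds z) := by
  obtain ⟨hαy, hyperp⟩ := lim_props hα hy
  obtain ⟨hβz, hzperp⟩ := lim_props hβ hz
  -- α z = 0
  have hαz : α.mulVec z = 0 := by
    have h1 : Tendsto (fun t : ℝ => α.mulVec ((NormedSpace.exp (t • β)).mulVec y))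
        atTop (nhds (α.mulVec z)) := ((cont_mulVec α).tendsto z).comp hz
    have h2 : ∀ t : ℝ, α.mulVec ((NormedSpace.exp (t • β)).mulVec y) = 0 := by
      intro t
      have hcm : α * NormedSpace.exp (t • β) = NormedSpace.exp (t • β) * α :=
        ((show Commute α β from hcomm).smul_right t).exp_right
      rw [Matrix.mulVec_mulVec, hcm, ← Matrix.mulVec_mulVec, hαy, Matrix.mulVec_zero]
    simp only [h2] at h1
    exact tendsto_nhds_unique h1 tendsto_const_nhds
  have hperp : ∀ w : Fin n → ℝ, α.mulVec w = 0 → β.mulVec w = 0 → (x - z) ⬝ᵥ w = 0 := by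
    intro w hw1 hw2
    have : x - z = (x - y) + (y - z) := by abel
    rw [this, add_dotProduct, hyperp w hw1, hzperp w hw2, add_zero]
  refine ⟨⟨hαz, hβz, hperp⟩, ?_⟩
  -- the combined flow
  have hγt : (α + β)ᵀ = α + β := by rw [Matrix.transpose_add, hα, hβ]
  have hγneg : (-(α + β)).PosSemidef := by
    have hne : -(α + β) = -α + -β := by abel
    rw [hne]
    exact hαneg.add hβneg
  obtain ⟨L, hL⟩ := exp_limit_exists hγt hγneg x
  obtain ⟨hγL, hLperp⟩ := lim_props hγt hL
  -- from (α+β) L = 0 deduce α L = 0 and β L = 0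
  have hsplit : α.mulVec L = 0 ∧ β.mulVec L = 0 := by
    have hsum : L ⬝ᵥ ((-α).mulVec L) + L ⬝ᵥ ((-β).mulVec L) = 0 := by
      have : (-α).mulVec L + (-β).mulVec L = -((α + β).mulVec L) := by
        rw [Matrix.add_mulVec, Matrix.neg_mulVec, Matrix.neg_mulVec, neg_add]
      rw [← dotProduct_add, this, hγL, neg_zero, dotProduct_zero]
    have ha := hαneg.dotProduct_mulVec_nonneg L
    have hb := hβneg.dotProduct_mulVec_nonneg L
    rw [star_trivial] at ha hb
    have hA0 : L ⬝ᵥ ((-α).mulVec L) = 0 := by linarith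
    have hB0 : L ⬝ᵥ ((-β).mulVec L) = 0 := by linarith
    constructor
    · have := (hαneg.dotProduct_mulVec_zero_iff L).mp (by rwa [star_trivial])
      rw [Matrix.neg_mulVec, neg_eq_zero] at this
      exact this
    · have := (hβneg.dotProduct_mulVec_zero_iff L).mp (by rwa [star_trivial])
      rw [Matrix.neg_mulVec, neg_eq_zero] at this
      exact this
  -- z = L
  have hzL : z = L := by
    set w : Fin n → ℝ := z - L with hw
    have hαw : α.mulVec w = 0 := by
      rw [hw, Matrix.mulVec_sub, hαz, hsplit.1, sub_zero]
    have hβw : β.mulVec w = 0 := by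
      rw [hw, Matrix.mulVec_sub, hβz, hsplit.2, sub_zero]
    have hγw : (α + β).mulVec w = 0 := by
      rw [Matrix.add_mulVec, hαw, hβw, add_zero]
    have h1 : (x - z) ⬝ᵥ w = 0 := hperp w hαw hβw
    have h2 : (x - L) ⬝ᵥ w = 0 := hLperp w hγw
    have h3 : w ⬝ᵥ w = 0 := by
      have : (x - L) - (x - z) = w := by rw [hw]; abel
      calc w ⬝ᵥ w = ((x - L) - (x - z)) ⬝ᵥ w := by rw [this]
        _ = (x - L) ⬝ᵥ w - (x - z) ⬝ᵥ w := by rw [sub_dotProduct]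
        _ = 0 := by rw [h1, h2, sub_zero]
    have : w = 0 := by
      ext i
      have := dotProduct_self_eq_zero.mp h3
      exact congrFun this i
    rw [← sub_eq_zero]
    simpa [hw] using this
  rwa [hzL]
end

section
/- Let 𝔞 be a finite-dimensional real vector space and for each α ∈ 𝔞 let F(α) ⊆ X be defined by fixed-point data such that: (i) F(α+εβ) = F(α) ∩ F(β) for all commuting pairs with 0 < ε < δ(α,β) for some δ(α,β) > 0, and (ii) for a basis α₁,…,αₙ, F_A := F(α₁) ∩ ⋯ ∩ F(αₙ). Then for every nonzero α ∈ 𝔞 and every neighborhood U of α in 𝔞 there exists β ∈ U with F(β) = F_A. -/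
open Filter

section Aux

variable {𝔞 : Type*} [NormedAddCommGroup 𝔞] [NormedSpace ℝ 𝔞]
  {X : Type*} {F : 𝔞 → Set X}
  (hF : ∀ α β : 𝔞, ∃ δ > (0 : ℝ), ∀ ε : ℝ, 0 < ε → ε < δ →
      F (α + ε • β) = F α ∩ F β)

include hF

/-- Every fixed point set is contained in `F 0`. -/
lemma aux_sub_zero (α : 𝔞) : F α ⊆ F 0 := by
  obtain ⟨δ, hδ, h⟩ := hF α 0
  have h2 := h (δ / 2) (by linarith) (by linarith)
  rw [smul_zero, add_zero] at h2
  rw [h2]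
  exact Set.inter_subset_right

/-- Positive scaling does not change the fixed point set. -/
lemma aux_smul_pos {c : ℝ} (hc : 0 < c) (v : 𝔞) : F (c • v) = F v := by
  obtain ⟨δ₁, hδ₁, h₁⟩ := hF 0 v
  obtain ⟨δ₂, hδ₂, h₂⟩ := hF 0 (c • v)
  set s : ℝ := min δ₁ (c * δ₂) / 2 with hs
  have hmin : 0 < min δ₁ (c * δ₂) := lt_min hδ₁ (by positivity)
  have hs0 : 0 < s := by positivity
  have e1 : F (s • v) = F 0 ∩ F v := by
    have := h₁ s hs0 (by
      have : min δ₁ (c * δ₂) ≤ δ₁ := min_le_left _ _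
      simp only [hs]; linarith)
    rwa [zero_add] at this
  have e2 : F (s • v) = F 0 ∩ F (c • v) := by
    have hsc : (s / c) • (c • v) = s • v := by
      rw [smul_smul, div_mul_cancel₀ _ (ne_of_gt hc)]
    have := h₂ (s / c) (by positivity) (by
      rw [div_lt_iff₀ hc]
      have : min δ₁ (c * δ₂) ≤ c * δ₂ := min_le_right _ _
      simp only [hs]; linarith [mul_comm δ₂ c])
    rw [zero_add, hsc] at this
    exact this
  have r1 : F 0 ∩ F v = F v := Set.inter_eq_right.mpr (aux_sub_zero hF v)
  have r2 : F 0 ∩ F (c • v) = F (c • v) :=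
    Set.inter_eq_right.mpr (aux_sub_zero hF (c • v))
  rw [← r2, ← e2, e1, r1]

lemma aux_sub_neg (v : 𝔞) : F v ⊆ F (-v) := by
  obtain ⟨δ, hδ, h⟩ := hF v (-v)
  set ε : ℝ := min δ 1 / 2 with hε
  have hε0 : 0 < ε := by
    have : 0 < min δ 1 := lt_min hδ one_pos
    positivity
  have hε1 : ε ≤ 1 / 2 := by
    have : min δ 1 ≤ 1 := min_le_right _ _
    simp only [hε]; linarith
  have key := h ε hε0 (by
    have : min δ 1 ≤ δ := min_le_left _ _
    simp only [hε]; linarith)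
  have hid : v + ε • (-v) = (1 - ε) • v := by
    rw [smul_neg, sub_smul, one_smul]; abel
  rw [hid, aux_smul_pos hF (by linarith : (0:ℝ) < 1 - ε) v] at key
  rw [key]
  exact Set.inter_subset_right

/-- Negation does not change the fixed point set. -/
lemma aux_neg (v : 𝔞) : F (-v) = F v := by
  refine le_antisymm ?_ (aux_sub_neg hF v)
  have := aux_sub_neg hF (-v)
  rwa [neg_neg] at this

/-- Superadditivity: the common fixed point set of `v` and `w` is fixed by `v + w`.
This is proved by a connectedness (clopen) argument along the line `v + t • w`. -/
lemma aux_add (v w : 𝔞) : F v ∩ F w ⊆ F (v + w) := by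
  -- key local lemma: how F changes when we move the parameter t
  have key : ∀ t : ℝ, ∃ r > (0:ℝ), ∀ t' : ℝ, t' ≠ t → |t' - t| < r →
      F (v + t' • w) = F (v + t • w) ∩ F w := by
    intro t
    obtain ⟨δ₁, hδ₁, h₁⟩ := hF (v + t • w) w
    obtain ⟨δ₂, hδ₂, h₂⟩ := hF (v + t • w) (-w)
    refine ⟨min δ₁ δ₂, lt_min hδ₁ hδ₂, ?_⟩
    intro t' hne habs
    rcases lt_or_gt_of_ne hne with hlt | hgt
    · -- t' < t : use -w
      have hε0 : 0 < t - t' := by linarith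
      have hεδ : t - t' < δ₂ := by
        have : |t' - t| = t - t' := by rw [abs_sub_comm]; exact abs_of_pos hε0
        have h2 := lt_of_lt_of_le habs (min_le_right δ₁ δ₂)
        linarith [this ▸ h2]
      have := h₂ (t - t') hε0 hεδ
      have hid : v + t • w + (t - t') • (-w) = v + t' • w := by
        rw [smul_neg, sub_smul]; abel
      rw [hid] at this
      rw [this, aux_neg hF w]
    · -- t < t' : use w
      have hε0 : 0 < t' - t := by linarith
      have hεδ : t' - t < δ₁ := by
        have : |t' - t| = t' - t := abs_of_pos hε0
        have h2 := lt_of_lt_of_le habs (min_le_left δ₁ δ₂)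
        linarith [this ▸ h2]
      have := h₁ (t' - t) hε0 hεδ
      have hid : v + t • w + (t' - t) • w = v + t' • w := by
        rw [sub_smul]; abel
      rw [hid] at this
      exact this
  set E : Set ℝ := {t : ℝ | F v ∩ F w ⊆ F (v + t • w)} with hE
  have h0 : (0:ℝ) ∈ E := by
    simp only [hE, Set.mem_setOf_eq, zero_smul, add_zero]
    exact Set.inter_subset_left
  have hopen : IsOpen E := by
    rw [Metric.isOpen_iff]
    intro t ht
    obtain ⟨r, hr, hkey⟩ := key t
    refine ⟨r, hr, ?_⟩
    intro t' ht'
    by_cases hne : t' = t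
    · rwa [hne]
    · rw [Metric.mem_ball, Real.dist_eq] at ht'
      have := hkey t' hne ht'
      simp only [hE, Set.mem_setOf_eq] at ht ⊢
      rw [this]
      exact Set.subset_inter ht Set.inter_subset_right
  have hclosed : IsClosed E := by
    rw [← isOpen_compl_iff, Metric.isOpen_iff]
    intro t ht
    obtain ⟨r, hr, hkey⟩ := key t
    refine ⟨r, hr, ?_⟩
    intro t' ht'
    by_cases hne : t' = t
    · rwa [hne]
    · rw [Metric.mem_ball, Real.dist_eq] at ht'
      have heq := hkey t' hne ht'
      simp only [hE, Set.mem_compl_iff, Set.mem_setOf_eq] at ht ⊢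
      intro hsub
      apply ht
      intro x hx
      have : x ∈ F (v + t' • w) := hsub hx
      rw [heq] at this
      exact this.1
  have huniv : E = Set.univ := IsClopen.eq_univ ⟨hclosed, hopen⟩ ⟨0, h0⟩
  have h1 : (1:ℝ) ∈ E := huniv ▸ Set.mem_univ 1
  simp only [hE, Set.mem_setOf_eq, one_smul] at h1
  exact h1

/-- Any scalar multiple of a basis vector still fixes the common fixed point set. -/
lemma aux_smul_any {n : ℕ} [Nonempty (Fin n)] (b : Module.Basis (Fin n) ℝ 𝔞) (c : ℝ) (i : Fin n) :
    (⋂ j, F (b j)) ⊆ F (c • b i) := by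
  rcases lt_trichotomy c 0 with hc | hc | hc
  · have : F (c • b i) = F (b i) := by
      rw [← aux_neg hF (c • b i), ← neg_smul, aux_smul_pos hF (by linarith : (0:ℝ) < -c)]
    rw [this]
    exact Set.iInter_subset _ i
  · subst hc
    rw [zero_smul]
    exact (Set.iInter_subset _ i).trans (aux_sub_zero hF (b i))
  · rw [aux_smul_pos hF hc]
    exact Set.iInter_subset _ i

/-- The common fixed point set of a basis is contained in every `F α`. -/
lemma aux_basis {n : ℕ} [Nonempty (Fin n)] (b : Module.Basis (Fin n) ℝ 𝔞) (α : 𝔞) :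
    (⋂ j, F (b j)) ⊆ F α := by
  have hsum : ∀ s : Finset (Fin n), ∀ c : Fin n → ℝ,
      (⋂ j, F (b j)) ⊆ F (∑ i ∈ s, c i • b i) := by
    intro s
    induction s using Finset.induction_on with
    | empty =>
      intro c
      rw [Finset.sum_empty]
      exact (Set.iInter_subset _ (Classical.arbitrary _)).trans
        (aux_sub_zero hF _)
    | insert _ _ ha ih =>
      intro c
      rw [Finset.sum_insert ha]
      intro x hx
      exact aux_add hF _ _ ⟨aux_smul_any hF b _ _ hx, ih c hx⟩
  have := hsum Finset.univ (fun i => b.repr α i)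
  rwa [b.sum_repr α] at this

end Aux

theorem stmt_9 (𝔞 : Type*) [NormedAddCommGroup 𝔞] [NormedSpace ℝ 𝔞]
    (X : Type*) (n : ℕ) (F : 𝔞 → Set X) (b : Module.Basis (Fin n) ℝ 𝔞)
    (hF : ∀ α β : 𝔞, ∃ δ > (0 : ℝ), ∀ ε : ℝ, 0 < ε → ε < δ →
      F (α + ε • β) = F α ∩ F β) :
    ∀ α : 𝔞, α ≠ 0 → ∀ U ∈ nhds α, ∃ β ∈ U, F β = ⋂ i, F (b i) := by
  intro α hα U hU
  rcases Nat.eq_zero_or_pos n with hn | hn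
  · -- n = 0 : the space is trivial, contradicting α ≠ 0
    exfalso
    apply hα
    have := (b.sum_repr α).symm
    subst hn
    simpa using this
  haveI : Nonempty (Fin n) := ⟨⟨0, hn⟩⟩
  obtain ⟨ρ, hρ, hball⟩ := Metric.mem_nhds_iff.mp hU
  -- construct β close to α fixing everything in the common fixed point set
  have constr : ∀ s : Finset (Fin n), ∀ ρ' : ℝ, 0 < ρ' →
      ∃ β : 𝔞, ‖β - α‖ < ρ' ∧ F β = F α ∩ ⋂ i ∈ s, F (b i) := by
    intro s
    induction s using Finset.induction_on with
    | empty =>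
      intro ρ' hρ'
      exact ⟨α, by simpa using hρ', by simp⟩
    | @insert a s ha ih =>
      intro ρ' hρ'
      obtain ⟨β', hβ'1, hβ'2⟩ := ih (ρ' / 2) (by linarith)
      obtain ⟨δ, hδ, hkey⟩ := hF β' (b a)
      set ε : ℝ := min (δ / 2) (ρ' / (2 * (‖b a‖ + 1))) with hε
      have hεpos : 0 < ε := by
        have h1 : 0 < δ / 2 := by linarith
        have h2 : 0 < ρ' / (2 * (‖b a‖ + 1)) := by positivity
        exact lt_min h1 h2
      have hεδ : ε < δ := by
        have : ε ≤ δ / 2 := min_le_left _ _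
        linarith
      refine ⟨β' + ε • b a, ?_, ?_⟩
      · have hb : ε * ‖b a‖ < ρ' / 2 := by
          have h1 : ε ≤ ρ' / (2 * (‖b a‖ + 1)) := min_le_right _ _
          have h2 : (0:ℝ) ≤ ‖b a‖ := norm_nonneg _
          have h3 : ε * ‖b a‖ ≤ (ρ' / (2 * (‖b a‖ + 1))) * ‖b a‖ :=
            mul_le_mul_of_nonneg_right h1 h2
          have h4 : (ρ' / (2 * (‖b a‖ + 1))) * ‖b a‖ < ρ' / 2 := by
            rw [div_mul_eq_mul_div, div_lt_div_iff₀ (by positivity) (by norm_num)]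
            nlinarith
          linarith
        calc ‖β' + ε • b a - α‖ = ‖(β' - α) + ε • b a‖ := by congr 1; abel
          _ ≤ ‖β' - α‖ + ‖ε • b a‖ := norm_add_le _ _
          _ = ‖β' - α‖ + ε * ‖b a‖ := by rw [norm_smul, Real.norm_eq_abs, abs_of_pos hεpos]
          _ < ρ' / 2 + ρ' / 2 := by linarith
          _ = ρ' := by ring
      · rw [hkey ε hεpos hεδ, hβ'2, Finset.set_biInter_insert]
        ext x
        simp only [Set.mem_inter_iff, Set.mem_iInter]
        tauto
  obtain ⟨β, hβ1, hβ2⟩ := constr Finset.univ ρ hρ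
  refine ⟨β, hball ?_, ?_⟩
  · rw [Metric.mem_ball, dist_eq_norm]
    exact hβ1
  · rw [hβ2]; simp only [Finset.mem_univ, Set.iInter_true]
    exact Set.inter_eq_right.mpr (aux_basis hF b α)
end

section
/- Let α₁,…,αₙ be commuting symmetric real m×m matrices. Then the set of coefficient vectors (c₁,…,cₙ) ∈ ℝⁿ such that ker(c₁α₁+⋯+cₙαₙ) = ker α₁ ∩ ⋯ ∩ ker αₙ is dense in ℝⁿ. -/
open Matrix

open Module.End in
private lemma euclid_ker {n' : ℕ} {E : Type*} [NormedAddCommGroup E] [InnerProductSpace ℝ E]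
    [FiniteDimensional ℝ E] (T : Fin n' → E →ₗ[ℝ] E)
    (hsym : ∀ i, (T i).IsSymmetric) (hcomm : Pairwise (Function.onFun Commute T))
    (c : Fin n' → ℝ)
    (hc : ∀ χ : Fin n' → ℝ, (⨅ i, eigenspace (T i) (χ i)) ≠ ⊥ → χ ≠ 0 →
      (∑ i, c i * χ i) ≠ 0) :
    LinearMap.ker (∑ i, c i • T i) = ⨅ i, LinearMap.ker (T i) := by
  set Tc : E →ₗ[ℝ] E := ∑ i, c i • T i with hTc
  set Eg : (Fin n' → ℝ) → Submodule ℝ E := fun χ => ⨅ i, eigenspace (T i) (χ i) with hEg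
  have hTv : ∀ χ (v : E), v ∈ Eg χ → Tc v = (∑ i, c i * χ i) • v := by
    intro χ v hv
    have h1 : ∀ i, T i v = χ i • v := fun i =>
      mem_eigenspace_iff.1 ((Submodule.mem_iInf _).1 hv i)
    rw [hTc]
    simp only [LinearMap.sum_apply, LinearMap.smul_apply, h1, smul_smul]
    rw [← Finset.sum_smul]
  have hTcsym : Tc.IsSymmetric := by
    intro x y
    rw [hTc]
    simp only [LinearMap.sum_apply, LinearMap.smul_apply, sum_inner, inner_sum,
      real_inner_smul_left, real_inner_smul_right]
    exact Finset.sum_congr rfl fun i _ => by rw [hsym i x y]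
  set U : Submodule ℝ E := ⨆ χ, ⨆ (_ : χ ≠ 0), Eg χ with hU
  have htop : Eg 0 ⊔ U = ⊤ := by
    rw [hU, ← iSup_split_single Eg 0]
    exact LinearMap.IsSymmetric.iSup_iInf_eq_top_of_commute hsym hcomm
  have horth := LinearMap.IsSymmetric.orthogonalFamily_iInf_eigenspaces hsym
  have hUE0 : U ≤ (Eg 0)ᗮ := by
    refine iSup₂_le fun χ hχ w hw => ?_
    rw [Submodule.mem_orthogonal]
    intro z hz
    simpa using horth (Ne.symm hχ) ⟨z, hz⟩ ⟨w, hw⟩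
  have hE0U : Eg 0 ≤ Uᗮ := Submodule.isOrtho_comm.mp hUE0
  have hrange : U ≤ LinearMap.range Tc := by
    refine iSup₂_le fun χ hχ => ?_
    by_cases hbot : Eg χ = ⊥
    · rw [hbot]; exact bot_le
    · intro v hv
      have hs := hc χ hbot hχ
      refine LinearMap.mem_range.2 ⟨(∑ i, c i * χ i)⁻¹ • v, ?_⟩
      rw [LinearMap.map_smul, hTv χ v hv, smul_smul, inv_mul_cancel₀ hs, one_smul]
  have hker : LinearMap.ker Tc ≤ Uᗮ := by
    intro x hx
    rw [Submodule.mem_orthogonal]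
    intro u hu
    obtain ⟨y, rfl⟩ := hrange hu
    rw [hTcsym y x, LinearMap.mem_ker.1 hx, inner_zero_right]
  have hUorth : Uᗮ = Eg 0 := by
    have h2 : Uᗮ ⊓ (U ⊔ Eg 0) = (Uᗮ ⊓ U) ⊔ Eg 0 := (inf_sup_assoc_of_le _ hE0U).symm
    rw [sup_comm] at htop
    rw [htop, inf_top_eq] at h2
    rw [h2, inf_comm, Submodule.inf_orthogonal_eq_bot, bot_sup_eq]
  apply le_antisymm
  · refine le_trans (hker.trans hUorth.le) (le_of_eq ?_)
    rw [hEg]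
    exact iInf_congr fun i => by rw [Pi.zero_apply, eigenspace_zero]
  · intro v hv
    have h0 : ∀ i, T i v = 0 := fun i =>
      LinearMap.mem_ker.1 ((Submodule.mem_iInf _).1 hv i)
    rw [LinearMap.mem_ker, hTc]
    simp [LinearMap.sum_apply, h0]

theorem stmt_10 (n m : ℕ) (α : Fin n → Matrix (Fin m) (Fin m) ℝ)
    (hsym : ∀ i, (α i)ᵀ = α i)
    (hcomm : ∀ i j, α i * α j = α j * α i) :
    Dense {c : Fin n → ℝ |
      LinearMap.ker (∑ i, c i • α i).mulVecLin =
        ⨅ i, LinearMap.ker (α i).mulVecLin} := by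
  classical
  set T : Fin n → EuclideanSpace ℝ (Fin m) →ₗ[ℝ] EuclideanSpace ℝ (Fin m) :=
    fun i => Matrix.toEuclideanLin (α i) with hT
  have hherm : ∀ i, (α i).IsHermitian := by
    intro i
    ext a b
    conv_rhs => rw [← hsym i]
    rw [Matrix.conjTranspose_apply, star_trivial, Matrix.transpose_apply]
  have hsymT : ∀ i, (T i).IsSymmetric := fun i =>
    Matrix.isHermitian_iff_isSymmetric.1 (hherm i)
  have hmul : ∀ A B : Matrix (Fin m) (Fin m) ℝ,
      Matrix.toEuclideanLin (A * B) = Matrix.toEuclideanLin A * Matrix.toEuclideanLin B := by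
    intro A B
    refine LinearMap.ext fun x => ?_
    simp [Matrix.toEuclideanLin_apply, Matrix.mulVec_mulVec]
  have hcommT : Pairwise (Function.onFun Commute T) := by
    intro i j _
    show T i * T j = T j * T i
    rw [hT]
    simp only [← hmul, hcomm i j]
  set badχ : Set (Fin n → ℝ) :=
    {χ | (⨅ i, Module.End.eigenspace (T i) (χ i)) ≠ ⊥ ∧ χ ≠ 0} with hbadχ
  have hfin : badχ.Finite := by
    refine (Set.Finite.pi fun i =>
      Module.End.finite_hasEigenvalue (T i)).subset ?_
    rintro χ ⟨h1, -⟩ i -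
    exact fun hbot => h1 (le_bot_iff.1 (hbot ▸ iInf_le _ i))
  set G : Set (Fin n → ℝ) := {c | ∀ χ ∈ badχ, (∑ i, c i * χ i) ≠ 0} with hG
  have hGsub : G ⊆ {c : Fin n → ℝ |
      LinearMap.ker (∑ i, c i • α i).mulVecLin =
        ⨅ i, LinearMap.ker (α i).mulVecLin} := by
    intro c hcG
    have hker := euclid_ker T hsymT hcommT c (fun χ h1 h2 => hcG χ ⟨h1, h2⟩)
    have hsum : Matrix.toEuclideanLin (∑ i, c i • α i) = ∑ i, c i • T i := by
      simp [map_sum, hT]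
    have hmem : ∀ (M : Matrix (Fin m) (Fin m) ℝ) (x : Fin m → ℝ),
        (WithLp.equiv 2 (Fin m → ℝ)).symm x ∈ LinearMap.ker (Matrix.toEuclideanLin M) ↔
          M *ᵥ x = 0 := by
      intro M x
      rw [LinearMap.mem_ker, WithLp.equiv_symm_apply,
        Matrix.toEuclideanLin_apply_piLp_toLp]
      simp
    show LinearMap.ker (∑ i, c i • α i).mulVecLin = ⨅ i, LinearMap.ker (α i).mulVecLin
    ext x
    have h1 : x ∈ LinearMap.ker (∑ i, c i • α i).mulVecLin ↔
        (WithLp.equiv 2 (Fin m → ℝ)).symm x ∈ LinearMap.ker (∑ i, c i • T i) := by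
      rw [← hsum, hmem, LinearMap.mem_ker, Matrix.mulVecLin_apply]
    have h2 : x ∈ (⨅ i, LinearMap.ker (α i).mulVecLin) ↔
        (WithLp.equiv 2 (Fin m → ℝ)).symm x ∈ ⨅ i, LinearMap.ker (T i) := by
      rw [Submodule.mem_iInf, Submodule.mem_iInf]
      refine forall_congr' fun i => ?_
      rw [hT, hmem, LinearMap.mem_ker, Matrix.mulVecLin_apply]
    rw [h1, h2, hker]
  have hGdense : Dense G := by
    set B : Set (Fin n → ℝ) := ⋃ χ ∈ badχ, {c : Fin n → ℝ | ∑ i, c i * χ i = 0} with hB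
    have hsubB : Bᶜ ⊆ G := by
      intro c hcB χ hχ h0
      exact hcB (Set.mem_biUnion hχ h0)
    refine Dense.mono hsubB ?_
    rw [← interior_eq_empty_iff_dense_compl]
    have hnull : MeasureTheory.volume B = 0 := by
      rw [hB]
      refine (MeasureTheory.measure_biUnion_null_iff hfin.countable).2 ?_
      intro χ hχmem
      obtain ⟨-, hχ0⟩ := hχmem
      obtain ⟨j, hj⟩ := Function.ne_iff.1 hχ0
      set φ : (Fin n → ℝ) →ₗ[ℝ] ℝ := ∑ i, χ i • LinearMap.proj i with hφ
      have hkerφ : LinearMap.ker φ ≠ ⊤ := by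
        intro htop
        have hzero := LinearMap.ker_eq_top.1 htop
        have h2 : φ (Pi.single j 1) = χ j := by
          simp [hφ, LinearMap.sum_apply, Pi.single_apply, mul_ite,
            Finset.sum_ite_eq']
        rw [hzero] at h2
        simp only [LinearMap.zero_apply] at h2
        exact hj h2.symm
      have hset : {c : Fin n → ℝ | ∑ i, c i * χ i = 0} = ↑(LinearMap.ker φ) := by
        ext c
        simp [hφ, LinearMap.mem_ker, LinearMap.sum_apply, mul_comm]
      rw [hset]
      exact MeasureTheory.Measure.addHaar_submodule _ _ hkerφ
    exact MeasureTheory.Measure.interior_eq_empty_of_null hnull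
  exact hGdense.mono hGsub
end

section
/- Let α₁,…,αₙ be commuting symmetric negative semidefinite real m×m matrices. Define P : ℝᵐ → ℝᵐ by P(x) = lim_{t→∞} exp(tαₙ)(⋯(lim_{t→∞} exp(tα₁)x)⋯). Then there exists δ > 0 such that for all 0 < ε₂,…,εₙ < δ, lim_{t→∞} exp(t(α₁ + ε₂α₂ + ⋯ + εₙαₙ))x = P(x) for every x ∈ ℝᵐ, and P is the orthogonal projection onto ker α₁ ∩ ⋯ ∩ ker αₙ. -/
open Matrix Filter

namespace Stmt17

variable {m : ℕ}

lemma isHermitian_of_transpose {A : Matrix (Fin m) (Fin m) ℝ} (h : Aᵀ = A) : A.IsHermitian := by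
  ext i j
  rw [conjTranspose_apply, star_trivial]
  exact (congrFun (congrFun h j) i).symm

noncomputable def projM {A : Matrix (Fin m) (Fin m) ℝ} (hA : A.IsHermitian) :
    Matrix (Fin m) (Fin m) ℝ :=
  (hA.eigenvectorUnitary : Matrix (Fin m) (Fin m) ℝ) *
    diagonal (fun i => if hA.eigenvalues i = 0 then (1:ℝ) else 0) *
    star (hA.eigenvectorUnitary : Matrix (Fin m) (Fin m) ℝ)

section proj

variable {A : Matrix (Fin m) (Fin m) ℝ} (hA : A.IsHermitian)

lemma star_mul_self_eigen : star (hA.eigenvectorUnitary : Matrix (Fin m) (Fin m) ℝ) *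
    (hA.eigenvectorUnitary : Matrix (Fin m) (Fin m) ℝ) = 1 :=
  mem_unitaryGroup_iff'.mp hA.eigenvectorUnitary.2

lemma mul_star_self_eigen : (hA.eigenvectorUnitary : Matrix (Fin m) (Fin m) ℝ) *
    star (hA.eigenvectorUnitary : Matrix (Fin m) (Fin m) ℝ) = 1 :=
  mem_unitaryGroup_iff.mp hA.eigenvectorUnitary.2

lemma star_diag_ind : star (diagonal (fun i => if hA.eigenvalues i = 0 then (1:ℝ) else 0)) =
    diagonal (fun i => if hA.eigenvalues i = 0 then (1:ℝ) else 0) := by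
  rw [star_eq_conjTranspose, diagonal_conjTranspose, star_trivial]

lemma projM_isHermitian : (projM hA).IsHermitian := by
  show (projM hA)ᴴ = projM hA
  rw [← star_eq_conjTranspose]
  unfold projM
  simp only [StarMul.star_mul, star_star, star_diag_ind hA, mul_assoc]

lemma projM_transpose : (projM hA)ᵀ = projM hA := by
  have h := projM_isHermitian hA
  ext i j
  conv_rhs => rw [← h.eq]
  rw [conjTranspose_apply, star_trivial]
  rfl

lemma mul_projM : A * projM hA = 0 := by
  have key : (diagonal (RCLike.ofReal ∘ hA.eigenvalues) : Matrix (Fin m) (Fin m) ℝ) *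
      diagonal (fun i => if hA.eigenvalues i = 0 then (1:ℝ) else 0) = 0 := by
    rw [diagonal_mul_diagonal]
    have : (fun i => (RCLike.ofReal ∘ hA.eigenvalues) i *
        (if hA.eigenvalues i = 0 then (1:ℝ) else 0)) = fun _ => 0 := by
      funext i
      by_cases h : hA.eigenvalues i = 0 <;>
        simp [h, RCLike.ofReal_real_eq_id]
    rw [this, diagonal_zero]
  have cancel : ∀ X : Matrix (Fin m) (Fin m) ℝ,
      star (hA.eigenvectorUnitary : Matrix (Fin m) (Fin m) ℝ) *
        ((hA.eigenvectorUnitary : Matrix (Fin m) (Fin m) ℝ) * X) = X := fun X => by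
    rw [← mul_assoc, star_mul_self_eigen hA, one_mul]
  nth_rewrite 1 [hA.spectral_theorem, Unitary.conjStarAlgAut_apply]
  unfold projM
  simp only [mul_assoc]
  rw [cancel, ← mul_assoc (diagonal _), key, zero_mul, mul_zero]

lemma projM_fix {y : Fin m → ℝ} (hy : A *ᵥ y = 0) : projM hA *ᵥ y = y := by
  set U : Matrix (Fin m) (Fin m) ℝ := (hA.eigenvectorUnitary : Matrix (Fin m) (Fin m) ℝ) with hU
  set w : Fin m → ℝ := star U *ᵥ y with hw
  have hUw : U *ᵥ w = y := by
    rw [hw, mulVec_mulVec, mul_star_self_eigen hA, one_mulVec]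
  have hDw : ∀ i, hA.eigenvalues i * w i = 0 := by
    have h1 : U *ᵥ (diagonal (RCLike.ofReal ∘ hA.eigenvalues) *ᵥ w) = 0 := by
      have hs := hA.spectral_theorem
      rw [Unitary.conjStarAlgAut_apply] at hs
      rw [hw, mulVec_mulVec, mulVec_mulVec, ← hs, hy]
    have h2 : diagonal (RCLike.ofReal ∘ hA.eigenvalues) *ᵥ w = 0 := by
      have := congrArg (fun v => star U *ᵥ v) h1
      simpa [hU, mulVec_mulVec, ← mul_assoc, star_mul_self_eigen hA, one_mulVec] using this
    intro i
    have := congrFun h2 i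
    simpa [mulVec_diagonal, RCLike.ofReal_real_eq_id] using this
  have hEw : (diagonal (fun i => if hA.eigenvalues i = 0 then (1:ℝ) else 0)) *ᵥ w = w := by
    funext i
    rw [mulVec_diagonal]
    by_cases h : hA.eigenvalues i = 0
    · simp [h]
    · have : w i = 0 := by
        rcases mul_eq_zero.mp (hDw i) with h' | h'
        · exact absurd h' h
        · exact h'
      simp [h, this]
  show (U * _ * star U) *ᵥ y = y
  rw [← mulVec_mulVec, ← mulVec_mulVec, ← hw, hEw, hUw]

lemma eigenvalues_nonpos (hN : (-A).PosSemidef) (i : Fin m) : hA.eigenvalues i ≤ 0 := by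
  have h0 := hN.dotProduct_mulVec_nonneg (⇑(hA.eigenvectorBasis i))
  rw [neg_mulVec, dotProduct_neg] at h0
  have h1 : hA.eigenvalues i = star (⇑(hA.eigenvectorBasis i)) ⬝ᵥ A *ᵥ ⇑(hA.eigenvectorBasis i) := by
    simpa using hA.eigenvalues_eq i
  rw [h1]
  exact neg_nonneg.mp h0

lemma exp_smul_eq (t : ℝ) :
    NormedSpace.exp (t • A) =
      (hA.eigenvectorUnitary : Matrix (Fin m) (Fin m) ℝ) *
        diagonal (fun i => Real.exp (t * hA.eigenvalues i)) *
        star (hA.eigenvectorUnitary : Matrix (Fin m) (Fin m) ℝ) := by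
  set U : Matrix (Fin m) (Fin m) ℝ := (hA.eigenvectorUnitary : Matrix (Fin m) (Fin m) ℝ) with hU
  have hUnit : IsUnit U := ⟨Unitary.toUnits hA.eigenvectorUnitary, rfl⟩
  have hinv : U⁻¹ = star U := inv_eq_left_inv (star_mul_self_eigen hA)
  have hsm : t • A = U * (diagonal (fun i => t * hA.eigenvalues i)) * U⁻¹ := by
    rw [hinv]
    nth_rewrite 1 [hA.spectral_theorem, Unitary.conjStarAlgAut_apply]
    rw [← Matrix.smul_mul, ← Matrix.mul_smul]
    congr 1
    congr 1
    funext i j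
    by_cases h : i = j <;> simp [diagonal_apply, h, RCLike.ofReal_real_eq_id]
  rw [hsm, Matrix.exp_conj U _ hUnit, hinv]
  rw [Matrix.exp_diagonal, Pi.exp_def, Real.exp_eq_exp_ℝ]

lemma projM_tendsto (hN : (-A).PosSemidef) :
    Tendsto (fun t : ℝ => NormedSpace.exp (t • A)) atTop (nhds (projM hA)) := by
  have hcont : Continuous (fun v : Fin m → ℝ =>
      (hA.eigenvectorUnitary : Matrix (Fin m) (Fin m) ℝ) * diagonal v *
        star (hA.eigenvectorUnitary : Matrix (Fin m) (Fin m) ℝ)) :=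
    (continuous_const.matrix_mul (continuous_id.matrix_diagonal)).matrix_mul continuous_const
  have hv : Tendsto (fun t : ℝ => fun i => Real.exp (t * hA.eigenvalues i)) atTop
      (nhds (fun i => if hA.eigenvalues i = 0 then (1:ℝ) else 0)) := by
    rw [tendsto_pi_nhds]
    intro i
    rcases lt_or_eq_of_le (eigenvalues_nonpos hA hN i) with hlt | heq
    · rw [if_neg (ne_of_lt hlt)]
      exact Real.tendsto_exp_atBot.comp (tendsto_id.atTop_mul_const_of_neg hlt)
    · rw [if_pos heq]
      simp only [heq, mul_zero, Real.exp_zero]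
      exact tendsto_const_nhds
  have := (hcont.tendsto _).comp hv
  exact Filter.Tendsto.congr (fun t => (exp_smul_eq hA t).symm) this

lemma projM_tendsto_mulVec (hN : (-A).PosSemidef) (x : Fin m → ℝ) :
    Tendsto (fun t : ℝ => (NormedSpace.exp (t • A)).mulVec x) atTop
      (nhds (projM hA *ᵥ x)) :=
  ((continuous_id.matrix_mulVec continuous_const).tendsto _).comp (projM_tendsto hA hN)

lemma commute_projM (hN : (-A).PosSemidef) {B : Matrix (Fin m) (Fin m) ℝ}
    (h : B * A = A * B) : B * projM hA = projM hA * B := by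
  have heq : ∀ t : ℝ, B * NormedSpace.exp (t • A) = NormedSpace.exp (t • A) * B := by
    letI : SeminormedRing (Matrix (Fin m) (Fin m) ℝ) := Matrix.linftyOpSemiNormedRing
    letI : NormedRing (Matrix (Fin m) (Fin m) ℝ) := Matrix.linftyOpNormedRing
    letI : NormedAlgebra ℝ (Matrix (Fin m) (Fin m) ℝ) := Matrix.linftyOpNormedAlgebra
    intro t
    have hc : Commute B A := h
    exact ((hc.smul_right t).exp_right).eq
  have h1 : Tendsto (fun t : ℝ => B * NormedSpace.exp (t • A)) atTop
      (nhds (B * projM hA)) :=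
    ((continuous_const.matrix_mul continuous_id).tendsto _).comp (projM_tendsto hA hN)
  have h2 : Tendsto (fun t : ℝ => NormedSpace.exp (t • A) * B) atTop
      (nhds (projM hA * B)) :=
    ((continuous_id.matrix_mul continuous_const).tendsto _).comp (projM_tendsto hA hN)
  exact tendsto_nhds_unique (h1.congr heq) h2

end proj

lemma sum_mulVec {ι : Type*} (s : Finset ι) (M : ι → Matrix (Fin m) (Fin m) ℝ)
    (x : Fin m → ℝ) : (∑ i ∈ s, M i) *ᵥ x = ∑ i ∈ s, (M i) *ᵥ x := by
  classical
  induction s using Finset.induction with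
  | empty => simp [zero_mulVec]
  | insert _ _ h ih => simp [Finset.sum_insert h, add_mulVec, ih]

lemma dotProduct_sum' {ι : Type*} (s : Finset ι) (v : Fin m → ℝ) (w : ι → Fin m → ℝ) :
    v ⬝ᵥ (∑ i ∈ s, w i) = ∑ i ∈ s, v ⬝ᵥ w i := by
  classical
  induction s using Finset.induction with
  | empty => simp
  | insert _ _ h ih => simp [Finset.sum_insert h, dotProduct_add, ih]

noncomputable def Qmat (P : ℕ → Matrix (Fin m) (Fin m) ℝ) : ℕ → Matrix (Fin m) (Fin m) ℝ
  | 0 => 1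
  | (k+1) => P k * Qmat P k

end Stmt17


open Stmt17

/-- Linear model of Theorem 2.8.  `f i.succ x` is the limit of the gradient flow of
`α i` starting at `f i.castSucc x`, so that `P := f (Fin.last (n+1))` is the iterated
limit map `x ↦ lim exp(t αₙ)(⋯ (lim exp(t α₁) x) ⋯)`. -/
theorem stmt_17 (n m : ℕ) (α : Fin (n + 1) → Matrix (Fin m) (Fin m) ℝ)
    (hsym : ∀ i, (α i)ᵀ = α i)
    (hcomm : ∀ i j, α i * α j = α j * α i)
    (hneg : ∀ i, (-(α i)).PosSemidef)
    (f : Fin (n + 2) → (Fin m → ℝ) → (Fin m → ℝ))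
    (hf0 : f 0 = id)
    (hf : ∀ i : Fin (n + 1), ∀ x : Fin m → ℝ,
      Tendsto (fun t : ℝ => (NormedSpace.exp (t • α i)).mulVec (f i.castSucc x))
        atTop (nhds (f i.succ x))) :
    (∃ δ > (0 : ℝ), ∀ ε : Fin (n + 1) → ℝ, ε 0 = 1 →
      (∀ i, i ≠ 0 → 0 < ε i ∧ ε i < δ) →
      ∀ x : Fin m → ℝ,
        Tendsto (fun t : ℝ => (NormedSpace.exp (t • ∑ i, ε i • α i)).mulVec x)
          atTop (nhds (f (Fin.last (n + 1)) x))) ∧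
    (∀ x : Fin m → ℝ,
      (∀ i, (α i).mulVec (f (Fin.last (n + 1)) x) = 0) ∧
      ∀ z : Fin m → ℝ, (∀ i, (α i).mulVec z = 0) →
        (x - f (Fin.last (n + 1)) x) ⬝ᵥ z = 0) := by
  classical
  have hherm : ∀ i, (α i).IsHermitian := fun i => isHermitian_of_transpose (hsym i)
  set Pf : Fin (n+1) → Matrix (Fin m) (Fin m) ℝ := fun i => projM (hherm i) with hPf
  set P : ℕ → Matrix (Fin m) (Fin m) ℝ :=
    fun k => if h : k < n + 1 then Pf ⟨k, h⟩ else 1 with hP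
  have hPfeq : ∀ i : Fin (n+1), Pf i = projM (hherm i) := fun _ => rfl
  have hPk : ∀ (k : ℕ) (h : k < n + 1), P k = projM (hherm ⟨k, h⟩) := by
    intro k h
    simp only [hP, dif_pos h, hPfeq]
  have hPi : ∀ i : Fin (n+1), P i.val = projM (hherm i) := by
    intro i
    rw [hPk i.val i.isLt]
  -- f in terms of Q
  have hfQ : ∀ i : Fin (n+2), ∀ x, f i x = Qmat P i.val *ᵥ x := by
    intro i
    induction i using Fin.induction with
    | zero =>
      intro x
      rw [hf0]
      show x = Qmat P 0 *ᵥ x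
      rw [show Qmat P 0 = 1 from rfl, one_mulVec]
    | succ i ih =>
      intro x
      have h1 := hf i x
      have h2 : f i.castSucc x = Qmat P i.val *ᵥ x := by
        have := ih x
        rwa [Fin.coe_castSucc] at this
      rw [h2] at h1
      have h3 := projM_tendsto_mulVec (hherm i) (hneg i) (Qmat P i.val *ᵥ x)
      have h4 := tendsto_nhds_unique h1 h3
      rw [Fin.val_succ, h4,
        show Qmat P (i.val+1) = P i.val * Qmat P i.val from rfl, hPi i,
        ← mulVec_mulVec]
  -- α i kills Q
  have hαQ : ∀ k : ℕ, k ≤ n + 1 → ∀ i : Fin (n+1), i.val < k → α i * Qmat P k = 0 := by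
    intro k
    induction k with
    | zero => exact fun _ i hi => absurd hi (Nat.not_lt_zero _)
    | succ k ih =>
      intro hk i hi
      have hkn : k < n + 1 := hk
      show α i * (P k * Qmat P k) = 0
      rcases Nat.lt_succ_iff_lt_or_eq.mp hi with hlt | heq
      · rw [hPk k hkn, ← mul_assoc,
          commute_projM (hherm ⟨k, hkn⟩) (hneg _) (hcomm i ⟨k, hkn⟩),
          mul_assoc, ih (le_of_lt hkn) i hlt, mul_zero]
      · obtain rfl : i = ⟨k, hkn⟩ := Fin.ext heq
        rw [hPk k hkn, ← mul_assoc, mul_projM (hherm _), zero_mul]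
  -- Q fixes common kernel, mulVec version
  have hQfix : ∀ z : Fin m → ℝ, (∀ i, α i *ᵥ z = 0) →
      ∀ k : ℕ, k ≤ n + 1 → Qmat P k *ᵥ z = z := by
    intro z hz k
    induction k with
    | zero => intro _; show (1 : Matrix (Fin m) (Fin m) ℝ) *ᵥ z = z; rw [one_mulVec]
    | succ k ih =>
      intro hk
      have hkn : k < n + 1 := hk
      show (P k * Qmat P k) *ᵥ z = z
      rw [← mulVec_mulVec, ih (le_of_lt hkn), hPk k hkn,
        projM_fix (hherm _) (hz ⟨k, hkn⟩)]
  -- vecMul version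
  have hQfix' : ∀ z : Fin m → ℝ, (∀ i, α i *ᵥ z = 0) →
      ∀ k : ℕ, k ≤ n + 1 → z ᵥ* Qmat P k = z := by
    intro z hz k
    induction k with
    | zero => intro _; show z ᵥ* (1 : Matrix (Fin m) (Fin m) ℝ) = z; rw [vecMul_one]
    | succ k ih =>
      intro hk
      have hkn : k < n + 1 := hk
      have hzP : z ᵥ* P k = z := by
        rw [hPk k hkn, ← mulVec_transpose, projM_transpose,
          projM_fix (hherm _) (hz ⟨k, hkn⟩)]
      show z ᵥ* (P k * Qmat P k) = z
      rw [← vecMul_vecMul, hzP, ih (le_of_lt hkn)]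
  have hlastQ : ∀ x, f (Fin.last (n+1)) x = Qmat P (n+1) *ᵥ x := by
    intro x
    have := hfQ (Fin.last (n+1)) x
    rwa [Fin.val_last] at this
  have hkerQ : ∀ (v : Fin m → ℝ) (i : Fin (n+1)), α i *ᵥ (Qmat P (n+1) *ᵥ v) = 0 := by
    intro v i
    rw [mulVec_mulVec, hαQ (n+1) le_rfl i i.isLt, zero_mulVec]
  constructor
  · -- part 1
    refine ⟨1, one_pos, ?_⟩
    intro ε hε0 hεlt x
    have hεpos : ∀ i, 0 < ε i := by
      intro i
      by_cases h : i = 0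
      · rw [h, hε0]; exact one_pos
      · exact (hεlt i h).1
    set A : Matrix (Fin m) (Fin m) ℝ := ∑ i, ε i • α i with hAdef
    have hAsym : Aᵀ = A := by
      rw [hAdef, transpose_sum]
      congr 1
      funext i
      rw [transpose_smul, hsym]
    have hAherm : A.IsHermitian := isHermitian_of_transpose hAsym
    have hexpand : ∀ y : Fin m → ℝ, y ⬝ᵥ (A *ᵥ y) = ∑ i, ε i * (y ⬝ᵥ (α i *ᵥ y)) := by
      intro y
      rw [hAdef, Stmt17.sum_mulVec, dotProduct_sum']
      congr 1
      funext i
      rw [smul_mulVec, dotProduct_smul, smul_eq_mul]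
    have hterm : ∀ (i : Fin (n+1)) (y : Fin m → ℝ), y ⬝ᵥ (α i *ᵥ y) ≤ 0 := by
      intro i y
      have h := (hneg i).dotProduct_mulVec_nonneg y
      rw [star_trivial, neg_mulVec, dotProduct_neg] at h
      linarith
    have hAneg : (-A).PosSemidef := by
      apply PosSemidef.of_dotProduct_mulVec_nonneg
      · exact hAherm.neg
      · intro y
        rw [star_trivial, neg_mulVec, dotProduct_neg, hexpand]
        have : ∑ i, ε i * (y ⬝ᵥ (α i *ᵥ y)) ≤ 0 :=
          Finset.sum_nonpos fun i _ =>
            mul_nonpos_of_nonneg_of_nonpos (le_of_lt (hεpos i)) (hterm i y)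
        linarith
    have hker : ∀ z : Fin m → ℝ, A *ᵥ z = 0 → ∀ i, α i *ᵥ z = 0 := by
      intro z hz i
      have h0 : ∑ j, ε j * (z ⬝ᵥ (α j *ᵥ z)) = 0 := by
        rw [← hexpand, hz, dotProduct_zero]
      have hterm0 : ε i * (z ⬝ᵥ (α i *ᵥ z)) = 0 := by
        have := (Finset.sum_eq_zero_iff_of_nonpos (fun j _ =>
          mul_nonpos_of_nonneg_of_nonpos (le_of_lt (hεpos j)) (hterm j z))).mp h0
        exact this i (Finset.mem_univ i)
      have hz0 : z ⬝ᵥ (α i *ᵥ z) = 0 := by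
        rcases mul_eq_zero.mp hterm0 with h | h
        · exact absurd h (ne_of_gt (hεpos i))
        · exact h
      have := ((hneg i).dotProduct_mulVec_zero_iff z).mp
        (by rw [star_trivial, neg_mulVec, dotProduct_neg, hz0, neg_zero])
      rwa [neg_mulVec, neg_eq_zero] at this
    have hAQ : A * Qmat P (n+1) = 0 := by
      rw [hAdef, Finset.sum_mul]
      refine Finset.sum_eq_zero fun i _ => ?_
      rw [smul_mul_assoc, hαQ (n+1) le_rfl i i.isLt, smul_zero]
    have hPiQ : ∀ v : Fin m → ℝ, projM hAherm *ᵥ (Qmat P (n+1) *ᵥ v) = Qmat P (n+1) *ᵥ v := by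
      intro v
      refine projM_fix hAherm ?_
      rw [mulVec_mulVec, hAQ, zero_mulVec]
    have hkerPi : ∀ (v : Fin m → ℝ) (i : Fin (n+1)), α i *ᵥ (projM hAherm *ᵥ v) = 0 := by
      intro v i
      refine hker _ ?_ i
      rw [mulVec_mulVec, mul_projM hAherm, zero_mulVec]
    have hPiPi : ∀ v : Fin m → ℝ, projM hAherm *ᵥ (projM hAherm *ᵥ v) = projM hAherm *ᵥ v := by
      intro v
      refine projM_fix hAherm ?_
      rw [mulVec_mulVec, mul_projM hAherm, zero_mulVec]
    have hQP : ∀ v : Fin m → ℝ, Qmat P (n+1) *ᵥ v = projM hAherm *ᵥ v := by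
      intro v
      set q : Fin m → ℝ := Qmat P (n+1) *ᵥ v with hq
      set p : Fin m → ℝ := projM hAherm *ᵥ v with hp
      have hzq : ∀ i, α i *ᵥ q = 0 := fun i => hkerQ v i
      have hzp : ∀ i, α i *ᵥ p = 0 := fun i => hkerPi v i
      have hvp : p ᵥ* projM hAherm = p := by
        rw [← mulVec_transpose, projM_transpose]
        exact hPiPi v
      have hvq : q ᵥ* projM hAherm = q := by
        rw [← mulVec_transpose, projM_transpose]
        exact hPiQ v
      have e1 : q ⬝ᵥ q = q ⬝ᵥ v := by
        nth_rewrite 2 [hq]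
        rw [dotProduct_mulVec, hQfix' q hzq (n+1) le_rfl]
      have e2 : p ⬝ᵥ p = p ⬝ᵥ v := by
        nth_rewrite 2 [hp]
        rw [dotProduct_mulVec, hvp]
      have e3 : q ⬝ᵥ p = q ⬝ᵥ v := by
        rw [hp, dotProduct_mulVec, hvq]
      have e4 : q ⬝ᵥ p = p ⬝ᵥ v := by
        rw [dotProduct_comm, hq, dotProduct_mulVec, hQfix' p hzp (n+1) le_rfl]
      have e5 : (q - p) ⬝ᵥ (q - p) = 0 := by
        rw [sub_dotProduct, dotProduct_sub, dotProduct_sub, e1, e2,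
          dotProduct_comm p q]
        rw [e3]
        linarith [e3.symm.trans e4]
      exact sub_eq_zero.mp (dotProduct_self_eq_zero.mp e5)
    have htd := projM_tendsto_mulVec hAherm hAneg x
    rw [hlastQ x, hQP x]
    exact htd
  · -- part 2
    intro x
    constructor
    · intro i
      rw [hlastQ x]
      exact hkerQ x i
    · intro z hz
      rw [hlastQ x, sub_dotProduct]
      have : (Qmat P (n+1) *ᵥ x) ⬝ᵥ z = x ⬝ᵥ z := by
        rw [dotProduct_comm, dotProduct_mulVec, hQfix' z hz (n+1) le_rfl, dotProduct_comm]
      rw [this, sub_self]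
end
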